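/- Let q be a prime power and f a polynomial over F_q of degree d with 2 ≤ d ≤ q−1, and suppose d divides q−1. Then the non-hitting index satisfies q(q−1)/d ≤ v_0(f) ≤ (d−1)·q(q−1)/d, where v_0(f) is the number of pairs (a,b) ∈ F_q² such that f(x) − a·x − b = 0 has no solution in F_q. -/

import Mathlib

open Finset Polynomial

/-- For a function `u` on a finite type with all fibers of size ≤ d, the number of
ordered collision pairs is between `2·(#missed values)` and `d·(#missed values)`. -/
lemma pair_count_bounds {F : Type*} [Fintype F] [DecidableEq F] (u : F → F) (d : ℕ)
    (hfib : ∀ v : F, (univ.filter fun x => u x = v).card ≤ d) :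
    (univ.offDiag.filter fun p : F × F => u p.1 = u p.2).card
        ≤ d * ((univ.image u)ᶜ.card) ∧
    2 * ((univ.image u)ᶜ.card)
        ≤ (univ.offDiag.filter fun p : F × F => u p.1 = u p.2).card := by
  set im := univ.image u with him
  set k : F → ℕ := fun v => (univ.filter fun x => u x = v).card with hk
  have hq : Fintype.card F = ∑ v ∈ im, k v := by
    rw [← Finset.card_univ]
    exact card_eq_sum_card_fiberwise (fun x _ => mem_image_of_mem u (mem_univ x))
  have hk1 : ∀ v ∈ im, 1 ≤ k v := by
    intro v hv
    rw [him, mem_image] at hv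
    obtain ⟨x, -, hx⟩ := hv
    exact card_pos.mpr ⟨x, by simp [hk, hx]⟩
  have hm : imᶜ.card = ∑ v ∈ im, (k v - 1) := by
    have h1 : ∑ v ∈ im, (k v - 1) + im.card = Fintype.card F := by
      rw [hq, Finset.card_eq_sum_ones, ← Finset.sum_add_distrib]
      exact Finset.sum_congr rfl fun v hv => by have := hk1 v hv; omega
    have h2 : im.card ≤ Fintype.card F := card_le_univ im
    rw [Finset.card_compl]
    omega
  have hP : (univ.offDiag.filter fun p : F × F => u p.1 = u p.2).card
      = ∑ v ∈ im, (k v * k v - k v) := by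
    rw [card_eq_sum_card_fiberwise (f := fun p : F × F => u p.1)
      (t := im) (fun p _ => mem_image_of_mem u (mem_univ p.1))]
    refine Finset.sum_congr rfl fun v hv => ?_
    have hset : ((univ.offDiag.filter fun p : F × F => u p.1 = u p.2).filter
        fun p => u p.1 = v) = (univ.filter fun x => u x = v).offDiag := by
      ext p
      simp only [mem_filter, Finset.mem_offDiag, mem_univ, true_and]
      constructor
      · rintro ⟨⟨hne, heq⟩, hv1⟩
        exact ⟨hv1, heq ▸ hv1, hne⟩
      · rintro ⟨h1, h2, hne⟩
        exact ⟨⟨hne, h1.trans h2.symm⟩, h1⟩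
    rw [hset, offDiag_card]
  have key : ∀ v ∈ im, k v * k v - k v = k v * (k v - 1) := by
    intro v hv
    obtain ⟨k', hk'⟩ : ∃ k', k v = k' + 1 := ⟨k v - 1, by have := hk1 v hv; omega⟩
    rw [hk']
    simp only [Nat.add_sub_cancel]
    rw [Nat.mul_succ]
    omega
  constructor
  · rw [hP, hm, Finset.mul_sum]
    refine Finset.sum_le_sum fun v hv => ?_
    rw [key v hv]
    exact Nat.mul_le_mul_right _ (hfib v)
  · rw [hP, hm, Finset.mul_sum]
    refine Finset.sum_le_sum fun v hv => ?_
    rw [key v hv]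
    obtain ⟨k', hk'⟩ : ∃ k', k v = k' + 1 := ⟨k v - 1, by have := hk1 v hv; omega⟩
    rcases Nat.eq_zero_or_pos k' with h | h
    · simp [hk', h]
    · rw [hk']
      simp only [Nat.add_sub_cancel]
      exact Nat.mul_le_mul_right _ (by omega)

/-- if `f` is a polynomial of degree `d` over `F_q` with `2 ≤ d ≤ q−1` and
`d ∣ q−1`, then `q(q−1)/d ≤ v_0(f) ≤ (d−1)·q(q−1)/d`, where `v_0(f)` is the number of
pairs `(a,b)` such that `f(x) − a·x − b = 0` has no solution. -/
theorem stmt6 (F : Type*) [Field F] [Fintype F] (f : Polynomial F) (d : ℕ)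
    (hdeg : f.natDegree = d) (hd2 : 2 ≤ d) (hdq : d ≤ Fintype.card F - 1)
    (hdvd : d ∣ Fintype.card F - 1) :
    Fintype.card F * (Fintype.card F - 1) / d
        ≤ Nat.card {ab : F × F // ∀ x : F, f.eval x - ab.1 * x - ab.2 ≠ 0} ∧
    Nat.card {ab : F × F // ∀ x : F, f.eval x - ab.1 * x - ab.2 ≠ 0}
        ≤ (d - 1) * (Fintype.card F * (Fintype.card F - 1)) / d := by
  classical
  set g : F → F → F := fun a x => f.eval x - a * x with hg
  -- fiber bound: each value of g a is attained at most d times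
  have hfib : ∀ a v : F, (univ.filter fun x => g a x = v).card ≤ d := by
    intro a v
    set p : Polynomial F := f - (C a * X + C v) with hp
    have hdegp : p.natDegree = d := by
      rw [hp, natDegree_sub_eq_left_of_natDegree_lt, hdeg]
      calc (C a * X + C v).natDegree ≤ 1 := natDegree_linear_le
        _ < f.natDegree := by omega
    have hp0 : p ≠ 0 := fun h => by simp [h] at hdegp; omega
    have hsub : (univ.filter fun x => g a x = v) ⊆ p.roots.toFinset := by
      intro x hx
      rw [mem_filter] at hx
      rw [Multiset.mem_toFinset, mem_roots hp0]
      have hxv : g a x = v := hx.2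
      simp only [hg] at hxv
      simp only [hp, IsRoot, eval_sub, eval_add, eval_mul, eval_C, eval_X]
      linear_combination hxv
    calc (univ.filter fun x => g a x = v).card ≤ p.roots.toFinset.card :=
          card_le_card hsub
      _ ≤ Multiset.card p.roots := Multiset.toFinset_card_le _
      _ ≤ p.natDegree := card_roots' p
      _ = d := hdegp
  -- membership characterization
  have hmem : ∀ a b : F, b ∈ (univ.image (g a))ᶜ ↔ ∀ x : F, f.eval x - a * x - b ≠ 0 := by
    intro a b
    simp only [Finset.mem_compl, mem_image, mem_univ, true_and, not_exists]
    refine forall_congr' fun x => ?_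
    simp only [Ne, sub_eq_zero, hg]
  -- express v0 as a sum over a
  set v0 := Nat.card {ab : F × F // ∀ x : F, f.eval x - ab.1 * x - ab.2 ≠ 0} with hv0def
  have hv0 : v0 = ∑ a : F, ((univ.image (g a))ᶜ.card) := by
    rw [hv0def, Nat.card_eq_fintype_card, Fintype.card_subtype]
    rw [card_eq_sum_card_fiberwise (f := fun ab : F × F => ab.1)
      (t := univ) (fun x _ => mem_univ _)]
    refine Finset.sum_congr rfl fun a _ => ?_
    refine Finset.card_bij' (fun ab _ => ab.2) (fun b _ => (a, b)) ?_ ?_ ?_ ?_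
    · intro ab hab
      simp only [mem_filter, mem_univ, true_and] at hab
      exact (hmem a ab.2).mpr (hab.2 ▸ hab.1)
    · intro b hb
      simp only [mem_filter, mem_univ, true_and, and_true]
      exact (hmem a b).mp hb
    · intro ab hab
      simp only [mem_filter, mem_univ, true_and] at hab
      exact Prod.ext hab.2.symm rfl
    · intro b _
      rfl
  -- sum of collision-pair counts equals q(q-1)
  have hsumP : ∑ a : F, (univ.offDiag.filter fun p : F × F => g a p.1 = g a p.2).card
      = Fintype.card F * (Fintype.card F - 1) := by
    have hsw : ∑ a : F, (univ.offDiag.filter fun p : F × F => g a p.1 = g a p.2).card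
        = ∑ p ∈ (univ : Finset F).offDiag,
            (univ.filter fun a : F => g a p.1 = g a p.2).card := by
      simp only [Finset.card_filter]
      exact Finset.sum_comm
    rw [hsw]
    have hone : ∀ p ∈ (univ : Finset F).offDiag,
        (univ.filter fun a : F => g a p.1 = g a p.2).card = 1 := by
      rintro ⟨x, y⟩ hp
      rw [Finset.mem_offDiag] at hp
      have hxy : x ≠ y := hp.2.2
      have hsetone : (univ.filter fun a : F => g a x = g a y)
          = {(f.eval x - f.eval y) / (x - y)} := by
        ext a
        simp only [mem_filter, mem_univ, true_and, Finset.mem_singleton, hg]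
        rw [eq_div_iff (sub_ne_zero.mpr hxy)]
        constructor
        · intro h; linear_combination -h
        · intro h; linear_combination -h
      rw [hsetone, Finset.card_singleton]
    rw [Finset.sum_congr rfl hone, Finset.sum_const, smul_eq_mul, mul_one,
      offDiag_card, Finset.card_univ, Nat.mul_sub, mul_one]
  -- per-a bounds
  have hbounds := fun a : F => pair_count_bounds (g a) d (hfib a)
  have hlow : Fintype.card F * (Fintype.card F - 1) ≤ d * v0 := by
    rw [hv0, Finset.mul_sum, ← hsumP]
    exact Finset.sum_le_sum fun a _ => (hbounds a).1
  have hhigh : 2 * v0 ≤ Fintype.card F * (Fintype.card F - 1) := by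
    rw [hv0, Finset.mul_sum, ← hsumP]
    exact Finset.sum_le_sum fun a _ => (hbounds a).2
  constructor
  · exact Nat.div_le_of_le_mul hlow
  · obtain ⟨e, he⟩ := hdvd
    have hd0 : 0 < d := by omega
    have hdiv : (d - 1) * (Fintype.card F * (Fintype.card F - 1)) / d
        = (d - 1) * Fintype.card F * e := by
      rw [he, show (d - 1) * (Fintype.card F * (d * e)) = ((d - 1) * Fintype.card F * e) * d
        by ring, Nat.mul_div_cancel _ hd0]
    rw [hdiv]
    have h2d : d ≤ 2 * (d - 1) := by omega
    have : Fintype.card F * (Fintype.card F - 1) ≤ 2 * ((d - 1) * Fintype.card F * e) := by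
      rw [he]
      calc Fintype.card F * (d * e) ≤ Fintype.card F * ((2 * (d - 1)) * e) :=
            Nat.mul_le_mul_left _ (Nat.mul_le_mul_right _ h2d)
        _ = 2 * ((d - 1) * Fintype.card F * e) := by ring
    omega
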